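/- In a regular Euclidean (n+1)-gon with n ≥ 6, if two diagonals d₁ = v_a v_c and d₂ = v_b v_d cross (with vertices in cyclic order a, b, c, d) and each has length at most ⌊n/6⌋, then the internal angle at their crossing point is at least the angle in the extremal configuration where the diagonals share an endpoint and both have length exactly ⌊n/6⌋. -/

import Mathlib

open Real EuclideanGeometry

/-- The `j`-th vertex of the regular `m`-gon inscribed in the unit circle. -/
noncomputable def polyVertex (m j : ℕ) : EuclideanSpace ℝ (Fin 2) :=
  !₂[Real.cos (2 * π * j / m), Real.sin (2 * π * j / m)]

noncomputable def circPt (x : ℝ) : EuclideanSpace ℝ (Fin 2) :=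
  !₂[Real.cos x, Real.sin x]

lemma polyVertex_eq (m j : ℕ) : polyVertex m j = circPt (2 * π * j / m) := rfl

lemma trig_id (α β : ℝ) :
    Real.cos (2*(α+β)) - Real.cos (2*α) - Real.cos (2*β) + 1
      = -(4 * Real.sin α * Real.sin β * Real.cos (α+β)) := by
  have h2a : (2:ℝ)*α = α + α := by ring
  have h2b : (2:ℝ)*β = β + β := by ring
  have h2ab : (2:ℝ)*(α+β) = (α+β) + (α+β) := by ring
  rw [h2a, h2b, h2ab, Real.cos_add (α+β), Real.sin_add, Real.cos_add α α, Real.cos_add β β,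
    Real.cos_add α β]
  nlinarith [Real.sin_sq_add_cos_sq α, Real.sin_sq_add_cos_sq β]

lemma cos_eq_one_sub (x : ℝ) : Real.cos (2*x) = 1 - 2 * Real.sin x ^ 2 := by
  have h1 := Real.cos_sq x
  have h2 := Real.sin_sq_add_cos_sq x
  nlinarith

lemma chord_norm {u v : ℝ} (huv : u ≤ v) (h2 : v - u ≤ 2*π) :
    ‖circPt u - circPt v‖ = 2 * Real.sin ((v-u)/2) := by
  have hs : 0 ≤ Real.sin ((v-u)/2) :=
    Real.sin_nonneg_of_nonneg_of_le_pi (by linarith) (by linarith [Real.pi_pos])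
  have hcos : Real.cos (v-u) = 1 - 2 * Real.sin ((v-u)/2) ^ 2 := by
    have := cos_eq_one_sub ((v-u)/2)
    rw [show 2*((v-u)/2) = v - u by ring] at this
    exact this
  rw [EuclideanSpace.norm_eq]
  rw [show (2 * Real.sin ((v-u)/2)) = Real.sqrt ((2 * Real.sin ((v-u)/2))^2) by
    rw [Real.sqrt_sq (by linarith)]]
  congr 1
  have hvu : Real.cos (v - u) = Real.cos v * Real.cos u + Real.sin v * Real.sin u := by
    rw [Real.cos_sub]
  simp only [circPt, PiLp.sub_apply, PiLp.toLp_apply, Fin.sum_univ_two, Matrix.cons_val_zero, Matrix.cons_val_one,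
    Matrix.head_cons, Real.norm_eq_abs, sq_abs]
  nlinarith [Real.sin_sq_add_cos_sq u, Real.sin_sq_add_cos_sq v, hvu, hcos]

lemma chord_inner (u v w : ℝ) :
    (inner ℝ (circPt u - circPt v) (circPt w - circPt v) : ℝ)
      = Real.cos (u - w) - Real.cos (u - v) - Real.cos (w - v) + 1 := by
  simp only [circPt, PiLp.inner_apply, PiLp.sub_apply, PiLp.toLp_apply, Fin.sum_univ_two, Matrix.cons_val_zero,
    Matrix.cons_val_one, Matrix.head_cons, RCLike.inner_apply, conj_trivial]
  rw [Real.cos_sub, Real.cos_sub, Real.cos_sub]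
  nlinarith [Real.sin_sq_add_cos_sq v]

lemma chord_angle {x y z : ℝ} (hxy : x < y) (hyz : y < z) (hzx : z - x < 2*π) :
    InnerProductGeometry.angle (circPt x - circPt y) (circPt z - circPt y)
      = π - (z - x)/2 := by
  set α := (y - x)/2 with hα
  set β := (z - y)/2 with hβ
  have hπ := Real.pi_pos
  have hsa : 0 < Real.sin α := Real.sin_pos_of_pos_of_lt_pi (by simp [hα]; linarith) (by linarith)
  have hsb : 0 < Real.sin β := Real.sin_pos_of_pos_of_lt_pi (by simp [hβ]; linarith) (by linarith)
  have hab : α + β = (z - x)/2 := by simp [hα, hβ]; ring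
  have hna : ‖circPt x - circPt y‖ = 2 * Real.sin α := chord_norm hxy.le (by linarith)
  have hnb : ‖circPt y - circPt z‖ = 2 * Real.sin β := chord_norm hyz.le (by linarith)
  have hnb' : ‖circPt z - circPt y‖ = 2 * Real.sin β := by rw [← hnb, norm_sub_rev]
  have hinner : (inner ℝ (circPt x - circPt y) (circPt z - circPt y) : ℝ)
      = -(4 * Real.sin α * Real.sin β * Real.cos (α+β)) := by
    rw [chord_inner]
    rw [show x - z = -(2*(α+β)) by rw [hα, hβ]; ring,
      show x - y = -(2*α) by rw [hα]; ring,
      show z - y = 2*β by rw [hβ]; ring,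
      Real.cos_neg, Real.cos_neg]
    exact trig_id α β
  rw [InnerProductGeometry.angle, hinner, hna, hnb']
  rw [show -(4 * Real.sin α * Real.sin β * Real.cos (α+β)) / (2 * Real.sin α * (2 * Real.sin β))
      = -Real.cos (α+β) by field_simp; ring]
  rw [← Real.cos_pi_sub, Real.arccos_cos (by linarith) (by linarith)]
  rw [hab]

lemma vertex_angle {m i j l : ℕ} (hij : i < j) (hjl : j < l) (hlm : l < m) :
    ∠ (polyVertex m i) (polyVertex m j) (polyVertex m l)
      = π - π * ((l - i : ℕ) : ℝ) / m := by
  have hm : (0:ℝ) < m := by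
    have : 0 < m := by omega
    exact_mod_cast this
  have hπ := Real.pi_pos
  have hmono : ∀ {s t : ℕ}, s < t → 2 * π * s / m < 2 * π * t / m := by
    intro s t hst
    have hst' : (s:ℝ) < t := by exact_mod_cast hst
    gcongr
  have hsub : 2 * π * l / m - 2 * π * i / m = 2 * π * ((l - i : ℕ) : ℝ) / m := by
    rw [Nat.cast_sub (hij.trans hjl).le]; ring
  have hli : ((l - i : ℕ) : ℝ) < m := by
    have : l - i < m := by omega
    exact_mod_cast this
  have h2π : 2 * π * l / m - 2 * π * i / m < 2 * π := by
    rw [hsub]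
    rw [div_lt_iff₀ hm]
    nlinarith
  rw [polyVertex_eq, polyVertex_eq, polyVertex_eq]
  rw [EuclideanGeometry.angle, vsub_eq_sub, vsub_eq_sub]
  rw [chord_angle (hmono hij) (hmono hjl) h2π, hsub]
  ring

/-- In a regular Euclidean `(n+1)`-gon with `n ≥ 6`, if two diagonals
`d₁ = v_a v_c` and `d₂ = v_b v_d` cross (vertices in cyclic order `a,b,c,d`)
and each has length at most `⌊n/6⌋` (in edges of the shorter boundary arc),
then the internal angle at the crossing point `p` (the angle of the component
of the complement containing the centre, namely `∠ v_a p v_d`) is at least the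
angle `π·(1 − 2⌊n/6⌋/(n+1))` of the extremal configuration in which the two
diagonals share an endpoint and both have length exactly `⌊n/6⌋`. -/
theorem stmt_19 (n a b c d : ℕ) (hn : 6 ≤ n)
    (hab : a < b) (hbc : b < c) (hcd : c < d) (hdn : d ≤ n)
    (hd₁ : c - a ≤ n / 6) (hd₂ : d - b ≤ n / 6)
    (p : EuclideanSpace ℝ (Fin 2))
    (hp₁ : p ∈ segment ℝ (polyVertex (n + 1) a) (polyVertex (n + 1) c))
    (hp₂ : p ∈ segment ℝ (polyVertex (n + 1) b) (polyVertex (n + 1) d))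
    (hpa : p ≠ polyVertex (n + 1) a) (hpc : p ≠ polyVertex (n + 1) c)
    (hpb : p ≠ polyVertex (n + 1) b) (hpd : p ≠ polyVertex (n + 1) d) :
    π * (1 - 2 * ((n / 6 : ℕ) : ℝ) / (n + 1)) ≤
      ∠ (polyVertex (n + 1) a) p (polyVertex (n + 1) d) := by
  set A := polyVertex (n + 1) a with hA
  set C := polyVertex (n + 1) c with hC
  set D := polyVertex (n + 1) d with hD
  have hπ := Real.pi_pos
  have hac : a < c := hab.trans hbc
  -- p strictly between A and C
  have hsbtw : Sbtw ℝ A p C := ⟨mem_segment_iff_wbtw.mp hp₁, hpa, hpc⟩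
  have hpi : ∠ A p C = π := hsbtw.angle₁₂₃_eq_pi
  have hsplit : ∠ D p A + ∠ D p C = π :=
    EuclideanGeometry.angle_add_angle_eq_pi_of_angle_eq_pi D hpi
  -- the inscribed angle at C
  have hACD : ∠ A C D = π - π * ((d - a : ℕ) : ℝ) / ((n + 1 : ℕ) : ℝ) :=
    vertex_angle hac hcd (by omega)
  -- triangle sum in triangle p C D
  have htri : ∠ p C D + ∠ C D p + ∠ D p C = π :=
    EuclideanGeometry.angle_add_angle_add_angle_eq_pi D (Ne.symm hpc)
  -- ∠ p C D = ∠ A C D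
  have hpCD : ∠ p C D = ∠ A C D := by
    obtain ⟨u, v, hu, hv, huv, hP⟩ := hp₁
    have hu0 : u ≠ 0 := by
      rintro rfl
      apply hpc
      rw [← hP]
      have : v = 1 := by linarith
      simp [this]
    have hupos : 0 < u := lt_of_le_of_ne hu (Ne.symm hu0)
    have hpsub : p - C = u • (A - C) := by
      have hv1 : v = 1 - u := by linarith
      rw [← hP, hv1, smul_sub, sub_smul, one_smul]
      abel
    rw [EuclideanGeometry.angle, EuclideanGeometry.angle, vsub_eq_sub, vsub_eq_sub,
      vsub_eq_sub, hpsub, InnerProductGeometry.angle_smul_left_of_pos _ _ hupos]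
  have hCDp : 0 ≤ ∠ C D p := EuclideanGeometry.angle_nonneg _ _ _
  have hAD : ∠ A p D = ∠ D p A := EuclideanGeometry.angle_comm _ _ _
  -- arithmetic bound
  have hda : ((d - a : ℕ) : ℝ) ≤ 2 * ((n / 6 : ℕ) : ℝ) := by
    have : d - a ≤ 2 * (n / 6) := by omega
    exact_mod_cast this
  have hn1 : (0:ℝ) < ((n + 1 : ℕ) : ℝ) := by positivity
  have hfrac : π * ((d - a : ℕ) : ℝ) / ((n + 1 : ℕ) : ℝ)
      ≤ π * (2 * ((n / 6 : ℕ) : ℝ)) / ((n + 1 : ℕ) : ℝ) := by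
    gcongr
  have hcast : ((n + 1 : ℕ) : ℝ) = (n : ℝ) + 1 := by push_cast; ring
  have hgoal : π * (1 - 2 * ((n / 6 : ℕ) : ℝ) / ((n:ℝ) + 1))
      = π - π * (2 * ((n / 6 : ℕ) : ℝ)) / ((n + 1 : ℕ) : ℝ) := by
    rw [hcast]; field_simp
  rw [hgoal, hAD]
  linarith [hACD, htri, hpCD, hsplit]
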